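/- For every prime power q, f(q³, C_{10}) ≤ 2q², where C_{10} denotes the cycle of length 10. -/

import Mathlib

open SimpleGraph

/-- `G` is an `(r,k)`-graph: its vertex set can be partitioned into `r` parts,
each of size at most `k`, with at least one edge between any two distinct parts. -/
def IsRKGraph {V : Type} [Fintype V] (G : SimpleGraph V) (r k : ℕ) : Prop :=
  ∃ P : Fin r → Finset V,
    (∀ v : V, ∃! i, v ∈ P i) ∧
    (∀ i, (P i).card ≤ k) ∧
    ∀ i j : Fin r, i ≠ j → ∃ u ∈ P i, ∃ w ∈ P j, G.Adj u w

/-- `G` contains a subgraph isomorphic to `H`. -/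
def ContainsSub {W V : Type} (H : SimpleGraph W) (G : SimpleGraph V) : Prop :=
  ∃ f : H →g G, Function.Injective f

/-- `f(r,H)`: the minimum `k` for which there exists an `H`-free `(r,k)`-graph. -/
noncomputable def fGraph {W : Type} (H : SimpleGraph W) (r : ℕ) : ℕ :=
  sInf {k | ∃ (n : ℕ) (G : SimpleGraph (Fin n)), ¬ ContainsSub H G ∧ IsRKGraph G r k}

abbrev Quint (F : Type) : Type := F × F × F × F × F

def wrel {F : Type} [Field F] (p l : Quint F) : Prop :=
  l.2.1 = p.2.1 + l.1 * p.1 ∧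
  l.2.2.1 = p.2.2.1 + l.1 * p.2.1 ∧
  l.2.2.2.1 = p.2.2.2.1 + l.1 * p.2.2.1 ∧
  l.2.2.2.2 = p.2.2.2.2 + l.1 * p.2.2.2.1

def wadj {F : Type} [Field F] : Quint F ⊕ Quint F → Quint F ⊕ Quint F → Prop
  | Sum.inl p, Sum.inr l => wrel p l
  | Sum.inr l, Sum.inl p => wrel p l
  | _, _ => False

def WG (F : Type) [Field F] : SimpleGraph (Quint F ⊕ Quint F) where
  Adj := wadj
  symm := ⟨by rintro (p | l) (q | m) h <;> exact h⟩
  loopless := ⟨by rintro (p | l) h <;> exact h⟩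

lemma pentagon {F : Type} [Field F]
    {P0 P1 P2 P3 P4 L0 L1 L2 L3 L4 : Quint F}
    (r00 : wrel P0 L0) (r10 : wrel P1 L0)
    (r11 : wrel P1 L1) (r21 : wrel P2 L1)
    (r22 : wrel P2 L2) (r32 : wrel P3 L2)
    (r33 : wrel P3 L3) (r43 : wrel P4 L3)
    (r44 : wrel P4 L4) (r04 : wrel P0 L4)
    (hP01 : P0 ≠ P1) (hP12 : P1 ≠ P2) (hP23 : P2 ≠ P3) (hP34 : P3 ≠ P4) (hP40 : P4 ≠ P0)
    (hL01 : L0 ≠ L1) (hL12 : L1 ≠ L2) (hL23 : L2 ≠ L3) (hL34 : L3 ≠ L4) (hL40 : L4 ≠ L0) :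
    False := by
  obtain ⟨p00, p01, p02, p03, p04⟩ := P0
  obtain ⟨p10, p11, p12, p13, p14⟩ := P1
  obtain ⟨p20, p21, p22, p23, p24⟩ := P2
  obtain ⟨p30, p31, p32, p33, p34⟩ := P3
  obtain ⟨p40, p41, p42, p43, p44⟩ := P4
  obtain ⟨l00, l01, l02, l03, l04⟩ := L0
  obtain ⟨l10, l11, l12, l13, l14⟩ := L1
  obtain ⟨l20, l21, l22, l23, l24⟩ := L2
  obtain ⟨l30, l31, l32, l33, l34⟩ := L3
  obtain ⟨l40, l41, l42, l43, l44⟩ := L4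
  simp only [wrel] at r00 r10 r11 r21 r22 r32 r33 r43 r44 r04
  -- difference equations, t = 0 (P0 → P1 along L0)
  have d01 : p11 - p01 = (p10 - p00) * (-l00) := by linear_combination r00.1 - r10.1
  have d02 : p12 - p02 = (p10 - p00) * (-l00) ^ 2 := by
    linear_combination r00.2.1 - r10.2.1 - l00 * d01
  have d03 : p13 - p03 = (p10 - p00) * (-l00) ^ 3 := by
    linear_combination r00.2.2.1 - r10.2.2.1 - l00 * d02
  have d04 : p14 - p04 = (p10 - p00) * (-l00) ^ 4 := by
    linear_combination r00.2.2.2 - r10.2.2.2 - l00 * d03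
  -- t = 1
  have d11 : p21 - p11 = (p20 - p10) * (-l10) := by linear_combination r11.1 - r21.1
  have d12 : p22 - p12 = (p20 - p10) * (-l10) ^ 2 := by
    linear_combination r11.2.1 - r21.2.1 - l10 * d11
  have d13 : p23 - p13 = (p20 - p10) * (-l10) ^ 3 := by
    linear_combination r11.2.2.1 - r21.2.2.1 - l10 * d12
  have d14 : p24 - p14 = (p20 - p10) * (-l10) ^ 4 := by
    linear_combination r11.2.2.2 - r21.2.2.2 - l10 * d13
  -- t = 2
  have d21 : p31 - p21 = (p30 - p20) * (-l20) := by linear_combination r22.1 - r32.1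
  have d22 : p32 - p22 = (p30 - p20) * (-l20) ^ 2 := by
    linear_combination r22.2.1 - r32.2.1 - l20 * d21
  have d23 : p33 - p23 = (p30 - p20) * (-l20) ^ 3 := by
    linear_combination r22.2.2.1 - r32.2.2.1 - l20 * d22
  have d24 : p34 - p24 = (p30 - p20) * (-l20) ^ 4 := by
    linear_combination r22.2.2.2 - r32.2.2.2 - l20 * d23
  -- t = 3
  have d31 : p41 - p31 = (p40 - p30) * (-l30) := by linear_combination r33.1 - r43.1
  have d32 : p42 - p32 = (p40 - p30) * (-l30) ^ 2 := by
    linear_combination r33.2.1 - r43.2.1 - l30 * d31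
  have d33 : p43 - p33 = (p40 - p30) * (-l30) ^ 3 := by
    linear_combination r33.2.2.1 - r43.2.2.1 - l30 * d32
  have d34 : p44 - p34 = (p40 - p30) * (-l30) ^ 4 := by
    linear_combination r33.2.2.2 - r43.2.2.2 - l30 * d33
  -- t = 4 (P4 → P0 along L4)
  have d41 : p01 - p41 = (p00 - p40) * (-l40) := by linear_combination r44.1 - r04.1
  have d42 : p02 - p42 = (p00 - p40) * (-l40) ^ 2 := by
    linear_combination r44.2.1 - r04.2.1 - l40 * d41
  have d43 : p03 - p43 = (p00 - p40) * (-l40) ^ 3 := by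
    linear_combination r44.2.2.1 - r04.2.2.1 - l40 * d42
  have d44 : p04 - p44 = (p00 - p40) * (-l40) ^ 4 := by
    linear_combination r44.2.2.2 - r04.2.2.2 - l40 * d43
  -- moments
  have m0 : (p10 - p00) + (p20 - p10) + (p30 - p20) + (p40 - p30) + (p00 - p40) = 0 := by ring
  have m1 : (p10 - p00) * (-l00) + (p20 - p10) * (-l10) + (p30 - p20) * (-l20)
      + (p40 - p30) * (-l30) + (p00 - p40) * (-l40) = 0 := by
    linear_combination -(d01 + d11 + d21 + d31 + d41)
  have m2 : (p10 - p00) * (-l00) ^ 2 + (p20 - p10) * (-l10) ^ 2 + (p30 - p20) * (-l20) ^ 2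
      + (p40 - p30) * (-l30) ^ 2 + (p00 - p40) * (-l40) ^ 2 = 0 := by
    linear_combination -(d02 + d12 + d22 + d32 + d42)
  have m3 : (p10 - p00) * (-l00) ^ 3 + (p20 - p10) * (-l10) ^ 3 + (p30 - p20) * (-l20) ^ 3
      + (p40 - p30) * (-l30) ^ 3 + (p00 - p40) * (-l40) ^ 3 = 0 := by
    linear_combination -(d03 + d13 + d23 + d33 + d43)
  have m4 : (p10 - p00) * (-l00) ^ 4 + (p20 - p10) * (-l10) ^ 4 + (p30 - p20) * (-l20) ^ 4
      + (p40 - p30) * (-l30) ^ 4 + (p00 - p40) * (-l40) ^ 4 = 0 := by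
    linear_combination -(d04 + d14 + d24 + d34 + d44)
  -- nonvanishing of the a's
  have ha0 : p10 - p00 ≠ 0 := by
    intro h
    apply hP01
    have c0 : p00 = p10 := by linear_combination -h
    have c1 : p01 = p11 := by linear_combination -d01 + l00 * h
    have c2 : p02 = p12 := by linear_combination -d02 - l00 ^ 2 * h
    have c3 : p03 = p13 := by linear_combination -d03 + l00 ^ 3 * h
    have c4 : p04 = p14 := by linear_combination -d04 - l00 ^ 4 * h
    rw [c0, c1, c2, c3, c4]
  have ha1 : p20 - p10 ≠ 0 := by
    intro h
    apply hP12
    have c0 : p10 = p20 := by linear_combination -h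
    have c1 : p11 = p21 := by linear_combination -d11 + l10 * h
    have c2 : p12 = p22 := by linear_combination -d12 - l10 ^ 2 * h
    have c3 : p13 = p23 := by linear_combination -d13 + l10 ^ 3 * h
    have c4 : p14 = p24 := by linear_combination -d14 - l10 ^ 4 * h
    rw [c0, c1, c2, c3, c4]
  have ha2 : p30 - p20 ≠ 0 := by
    intro h
    apply hP23
    have c0 : p20 = p30 := by linear_combination -h
    have c1 : p21 = p31 := by linear_combination -d21 + l20 * h
    have c2 : p22 = p32 := by linear_combination -d22 - l20 ^ 2 * h
    have c3 : p23 = p33 := by linear_combination -d23 + l20 ^ 3 * h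
    have c4 : p24 = p34 := by linear_combination -d24 - l20 ^ 4 * h
    rw [c0, c1, c2, c3, c4]
  have ha3 : p40 - p30 ≠ 0 := by
    intro h
    apply hP34
    have c0 : p30 = p40 := by linear_combination -h
    have c1 : p31 = p41 := by linear_combination -d31 + l30 * h
    have c2 : p32 = p42 := by linear_combination -d32 - l30 ^ 2 * h
    have c3 : p33 = p43 := by linear_combination -d33 + l30 ^ 3 * h
    have c4 : p34 = p44 := by linear_combination -d34 - l30 ^ 4 * h
    rw [c0, c1, c2, c3, c4]
  have ha4 : p00 - p40 ≠ 0 := by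
    intro h
    apply hP40
    have c0 : p40 = p00 := by linear_combination -h
    have c1 : p41 = p01 := by linear_combination -d41 + l40 * h
    have c2 : p42 = p02 := by linear_combination -d42 - l40 ^ 2 * h
    have c3 : p43 = p03 := by linear_combination -d43 + l40 ^ 3 * h
    have c4 : p44 = p04 := by linear_combination -d44 - l40 ^ 4 * h
    rw [c0, c1, c2, c3, c4]
  -- distinct consecutive slopes
  have hu01 : l00 ≠ l10 := by
    intro h
    apply hL01
    have c1 : l01 = l11 := by linear_combination r10.1 - r11.1 + p10 * h
    have c2 : l02 = l12 := by linear_combination r10.2.1 - r11.2.1 + p11 * h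
    have c3 : l03 = l13 := by linear_combination r10.2.2.1 - r11.2.2.1 + p12 * h
    have c4 : l04 = l14 := by linear_combination r10.2.2.2 - r11.2.2.2 + p13 * h
    rw [h, c1, c2, c3, c4]
  have hu12 : l10 ≠ l20 := by
    intro h
    apply hL12
    have c1 : l11 = l21 := by linear_combination r21.1 - r22.1 + p20 * h
    have c2 : l12 = l22 := by linear_combination r21.2.1 - r22.2.1 + p21 * h
    have c3 : l13 = l23 := by linear_combination r21.2.2.1 - r22.2.2.1 + p22 * h
    have c4 : l14 = l24 := by linear_combination r21.2.2.2 - r22.2.2.2 + p23 * h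
    rw [h, c1, c2, c3, c4]
  have hu23 : l20 ≠ l30 := by
    intro h
    apply hL23
    have c1 : l21 = l31 := by linear_combination r32.1 - r33.1 + p30 * h
    have c2 : l22 = l32 := by linear_combination r32.2.1 - r33.2.1 + p31 * h
    have c3 : l23 = l33 := by linear_combination r32.2.2.1 - r33.2.2.1 + p32 * h
    have c4 : l24 = l34 := by linear_combination r32.2.2.2 - r33.2.2.2 + p33 * h
    rw [h, c1, c2, c3, c4]
  have hu34 : l30 ≠ l40 := by
    intro h
    apply hL34
    have c1 : l31 = l41 := by linear_combination r43.1 - r44.1 + p40 * h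
    have c2 : l32 = l42 := by linear_combination r43.2.1 - r44.2.1 + p41 * h
    have c3 : l33 = l43 := by linear_combination r43.2.2.1 - r44.2.2.1 + p42 * h
    have c4 : l34 = l44 := by linear_combination r43.2.2.2 - r44.2.2.2 + p43 * h
    rw [h, c1, c2, c3, c4]
  have hu40 : l40 ≠ l00 := by
    intro h
    apply hL40
    have c1 : l41 = l01 := by linear_combination r04.1 - r00.1 + p00 * h
    have c2 : l42 = l02 := by linear_combination r04.2.1 - r00.2.1 + p01 * h
    have c3 : l43 = l03 := by linear_combination r04.2.2.1 - r00.2.2.1 + p02 * h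
    have c4 : l44 = l04 := by linear_combination r04.2.2.2 - r00.2.2.2 + p03 * h
    rw [h, c1, c2, c3, c4]
  -- key products
  have key0 : (p10 - p00) * ((l10 - l00) * (l20 - l00) * (l30 - l00) * (l40 - l00)) = 0 := by
    linear_combination m4 + (l10 + l20 + l30 + l40) * m3
      + (l10 * l20 + l10 * l30 + l10 * l40 + l20 * l30 + l20 * l40 + l30 * l40) * m2
      + (l10 * l20 * l30 + l10 * l20 * l40 + l10 * l30 * l40 + l20 * l30 * l40) * m1
      + (l10 * l20 * l30 * l40) * m0
  have key1 : (p20 - p10) * ((l20 - l10) * (l30 - l10) * (l40 - l10) * (l00 - l10)) = 0 := by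
    linear_combination m4 + (l20 + l30 + l40 + l00) * m3
      + (l20 * l30 + l20 * l40 + l20 * l00 + l30 * l40 + l30 * l00 + l40 * l00) * m2
      + (l20 * l30 * l40 + l20 * l30 * l00 + l20 * l40 * l00 + l30 * l40 * l00) * m1
      + (l20 * l30 * l40 * l00) * m0
  have key2 : (p30 - p20) * ((l30 - l20) * (l40 - l20) * (l00 - l20) * (l10 - l20)) = 0 := by
    linear_combination m4 + (l30 + l40 + l00 + l10) * m3
      + (l30 * l40 + l30 * l00 + l30 * l10 + l40 * l00 + l40 * l10 + l00 * l10) * m2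
      + (l30 * l40 * l00 + l30 * l40 * l10 + l30 * l00 * l10 + l40 * l00 * l10) * m1
      + (l30 * l40 * l00 * l10) * m0
  have key3 : (p40 - p30) * ((l40 - l30) * (l00 - l30) * (l10 - l30) * (l20 - l30)) = 0 := by
    linear_combination m4 + (l40 + l00 + l10 + l20) * m3
      + (l40 * l00 + l40 * l10 + l40 * l20 + l00 * l10 + l00 * l20 + l10 * l20) * m2
      + (l40 * l00 * l10 + l40 * l00 * l20 + l40 * l10 * l20 + l00 * l10 * l20) * m1
      + (l40 * l00 * l10 * l20) * m0
  have key4 : (p00 - p40) * ((l00 - l40) * (l10 - l40) * (l20 - l40) * (l30 - l40)) = 0 := by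
    linear_combination m4 + (l00 + l10 + l20 + l30) * m3
      + (l00 * l10 + l00 * l20 + l00 * l30 + l10 * l20 + l10 * l30 + l20 * l30) * m2
      + (l00 * l10 * l20 + l00 * l10 * l30 + l00 * l20 * l30 + l10 * l20 * l30) * m1
      + (l00 * l10 * l20 * l30) * m0
  -- extract the disjunctions
  have k0 : l20 = l00 ∨ l30 = l00 := by
    have hprod := (mul_eq_zero.mp key0).resolve_left ha0
    rcases mul_eq_zero.mp hprod with h | h
    · rcases mul_eq_zero.mp h with h' | h'
      · rcases mul_eq_zero.mp h' with h'' | h''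
        · exact absurd (sub_eq_zero.mp h'').symm hu01
        · exact Or.inl (sub_eq_zero.mp h'')
      · exact Or.inr (sub_eq_zero.mp h')
    · exact absurd (sub_eq_zero.mp h) hu40
  have k1 : l30 = l10 ∨ l40 = l10 := by
    have hprod := (mul_eq_zero.mp key1).resolve_left ha1
    rcases mul_eq_zero.mp hprod with h | h
    · rcases mul_eq_zero.mp h with h' | h'
      · rcases mul_eq_zero.mp h' with h'' | h''
        · exact absurd (sub_eq_zero.mp h'').symm hu12
        · exact Or.inl (sub_eq_zero.mp h'')
      · exact Or.inr (sub_eq_zero.mp h')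
    · exact absurd (sub_eq_zero.mp h) hu01
  have k2 : l40 = l20 ∨ l00 = l20 := by
    have hprod := (mul_eq_zero.mp key2).resolve_left ha2
    rcases mul_eq_zero.mp hprod with h | h
    · rcases mul_eq_zero.mp h with h' | h'
      · rcases mul_eq_zero.mp h' with h'' | h''
        · exact absurd (sub_eq_zero.mp h'').symm hu23
        · exact Or.inl (sub_eq_zero.mp h'')
      · exact Or.inr (sub_eq_zero.mp h')
    · exact absurd (sub_eq_zero.mp h) hu12
  have k3 : l00 = l30 ∨ l10 = l30 := by
    have hprod := (mul_eq_zero.mp key3).resolve_left ha3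
    rcases mul_eq_zero.mp hprod with h | h
    · rcases mul_eq_zero.mp h with h' | h'
      · rcases mul_eq_zero.mp h' with h'' | h''
        · exact absurd (sub_eq_zero.mp h'').symm hu34
        · exact Or.inl (sub_eq_zero.mp h'')
      · exact Or.inr (sub_eq_zero.mp h')
    · exact absurd (sub_eq_zero.mp h) hu23
  have k4 : l10 = l40 ∨ l20 = l40 := by
    have hprod := (mul_eq_zero.mp key4).resolve_left ha4
    rcases mul_eq_zero.mp hprod with h | h
    · rcases mul_eq_zero.mp h with h' | h'
      · rcases mul_eq_zero.mp h' with h'' | h''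
        · exact absurd (sub_eq_zero.mp h'') (Ne.symm hu40)
        · exact Or.inl (sub_eq_zero.mp h'')
      · exact Or.inr (sub_eq_zero.mp h')
    · exact absurd (sub_eq_zero.mp h) hu34
  rcases k0 with h0 | h0
  · rcases k1 with h1 | h1
    · rcases k4 with h4 | h4
      · exact hu34 (h1.trans h4)
      · exact hu40 (h4.symm.trans h0)
    · rcases k3 with h3 | h3
      · exact hu23 (h0.trans h3)
      · exact hu34 (h3.symm.trans h1.symm)
  · rcases k2 with h2 | h2
    · rcases k1 with h1 | h1
      · exact hu01 (h1.symm.trans h0).symm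
      · exact hu12 (h1.symm.trans h2)
    · exact hu23 (h2.symm.trans h0.symm)

lemma adj_out_inl {F : Type} [Field F] {p : Quint F} {y : Quint F ⊕ Quint F}
    (h : (WG F).Adj (Sum.inl p) y) : ∃ l, y = Sum.inr l ∧ wrel p l := by
  cases y with
  | inl q => exact (h : False).elim
  | inr l => exact ⟨l, rfl, h⟩

lemma adj_out_inr {F : Type} [Field F] {l : Quint F} {y : Quint F ⊕ Quint F}
    (h : (WG F).Adj (Sum.inr l) y) : ∃ p, y = Sum.inl p ∧ wrel p l := by
  cases y with
  | inl p => exact ⟨p, rfl, h⟩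
  | inr m => exact (h : False).elim

lemma main_inl {F : Type} [Field F] (w : Fin 10 → Quint F ⊕ Quint F)
    (hadj : ∀ i, (WG F).Adj (w i) (w (i + 1))) (hinj : Function.Injective w)
    (P0 : Quint F) (h0 : w 0 = Sum.inl P0) : False := by
  have i0 : ((0 : Fin 10) + 1) = 1 := by decide
  have i1 : ((1 : Fin 10) + 1) = 2 := by decide
  have i2 : ((2 : Fin 10) + 1) = 3 := by decide
  have i3 : ((3 : Fin 10) + 1) = 4 := by decide
  have i4 : ((4 : Fin 10) + 1) = 5 := by decide
  have i5 : ((5 : Fin 10) + 1) = 6 := by decide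
  have i6 : ((6 : Fin 10) + 1) = 7 := by decide
  have i7 : ((7 : Fin 10) + 1) = 8 := by decide
  have i8 : ((8 : Fin 10) + 1) = 9 := by decide
  have i9 : ((9 : Fin 10) + 1) = 0 := by decide
  have h0' := hadj 0; rw [i0, h0] at h0'
  obtain ⟨L0, e1, r00⟩ := adj_out_inl h0'
  have h1' := hadj 1; rw [i1, e1] at h1'
  obtain ⟨P1, e2, r10⟩ := adj_out_inr h1'
  have h2' := hadj 2; rw [i2, e2] at h2'
  obtain ⟨L1, e3, r11⟩ := adj_out_inl h2'
  have h3' := hadj 3; rw [i3, e3] at h3'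
  obtain ⟨P2, e4, r21⟩ := adj_out_inr h3'
  have h4' := hadj 4; rw [i4, e4] at h4'
  obtain ⟨L2, e5, r22⟩ := adj_out_inl h4'
  have h5' := hadj 5; rw [i5, e5] at h5'
  obtain ⟨P3, e6, r32⟩ := adj_out_inr h5'
  have h6' := hadj 6; rw [i6, e6] at h6'
  obtain ⟨L3, e7, r33⟩ := adj_out_inl h6'
  have h7' := hadj 7; rw [i7, e7] at h7'
  obtain ⟨P4, e8, r43⟩ := adj_out_inr h7'
  have h8' := hadj 8; rw [i8, e8] at h8'
  obtain ⟨L4, e9, r44⟩ := adj_out_inl h8'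
  have h9' := hadj 9; rw [i9, e9, h0] at h9'
  have r04 : wrel P0 L4 := h9'
  -- distinctness
  have ne' : ∀ (a b : Fin 10), a ≠ b → w a ≠ w b := fun a b hab h => hab (hinj h)
  have hP01 : P0 ≠ P1 := fun h => ne' 0 2 (by decide) (by rw [h0, e2, h])
  have hP12 : P1 ≠ P2 := fun h => ne' 2 4 (by decide) (by rw [e2, e4, h])
  have hP23 : P2 ≠ P3 := fun h => ne' 4 6 (by decide) (by rw [e4, e6, h])
  have hP34 : P3 ≠ P4 := fun h => ne' 6 8 (by decide) (by rw [e6, e8, h])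
  have hP40 : P4 ≠ P0 := fun h => ne' 8 0 (by decide) (by rw [e8, h0, h])
  have hL01 : L0 ≠ L1 := fun h => ne' 1 3 (by decide) (by rw [e1, e3, h])
  have hL12 : L1 ≠ L2 := fun h => ne' 3 5 (by decide) (by rw [e3, e5, h])
  have hL23 : L2 ≠ L3 := fun h => ne' 5 7 (by decide) (by rw [e5, e7, h])
  have hL34 : L3 ≠ L4 := fun h => ne' 7 9 (by decide) (by rw [e7, e9, h])
  have hL40 : L4 ≠ L0 := fun h => ne' 9 1 (by decide) (by rw [e9, e1, h])
  exact pentagon r00 r10 r11 r21 r22 r32 r33 r43 r44 r04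
    hP01 hP12 hP23 hP34 hP40 hL01 hL12 hL23 hL34 hL40

lemma wg_c10_free (F : Type) [Field F] :
    ¬ ContainsSub (SimpleGraph.cycleGraph 10) (WG F) := by
  rintro ⟨f, hinj⟩
  have hadj : ∀ i : Fin 10, (WG F).Adj (f i) (f (i + 1)) := by
    intro i
    apply f.map_adj
    have : (SimpleGraph.cycleGraph (8 + 2)).Adj i (i + 1) := by
      rw [SimpleGraph.cycleGraph_adj]
      right
      exact add_sub_cancel_left i 1
    exact this
  cases hf0 : f 0 with
  | inl p => exact main_inl f hadj hinj p hf0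
  | inr l =>
      have h0' := hadj 0
      rw [show ((0 : Fin 10) + 1) = 1 from by decide, hf0] at h0'
      obtain ⟨p, e1, -⟩ := adj_out_inr h0'
      refine main_inl (fun i => f (i + 1)) (fun i => hadj (i + 1))
        (hinj.comp (add_left_injective 1)) p ?_
      show f (0 + 1) = Sum.inl p
      rw [show ((0 : Fin 10) + 1) = 1 from by decide]
      exact e1

section Partition

variable {F : Type} [Field F] [Fintype F] [DecidableEq F]

def vkey : Quint F ⊕ Quint F → F × F × F :=
  Sum.elim (fun p => (p.1, p.2.2.2.1, p.2.2.2.2)) (fun l => (l.1, l.2.1, l.2.2.1))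

def part (c : F × F × F) : Finset (Quint F ⊕ Quint F) :=
  (Finset.univ.image fun w : F × F => Sum.inl (c.1, w.1, w.2, c.2.1, c.2.2)) ∪
  (Finset.univ.image fun w : F × F => Sum.inr (c.1, c.2.1, c.2.2, w.1, w.2))

lemma mem_part {v : Quint F ⊕ Quint F} {c : F × F × F} :
    v ∈ part c ↔ vkey v = c := by
  rcases c with ⟨c0, c1, c2⟩
  rcases v with ⟨p0, p1, p2, p3, p4⟩ | ⟨l0, l1, l2, l3, l4⟩ <;>
    simp [part, vkey, Prod.ext_iff] <;> aesop

end Partition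

/-- For every prime power `q`, `f(q³, C_{10}) ≤ 2q²`. -/
theorem stmt17 (q : ℕ) (hq : IsPrimePow q) :
    fGraph (SimpleGraph.cycleGraph 10) (q ^ 3) ≤ 2 * q ^ 2 := by
  classical
  obtain ⟨p, e, hp, he, rfl⟩ := hq
  haveI : Fact p.Prime := ⟨Nat.prime_iff.mpr hp⟩
  set F := GaloisField p e with hFdef
  haveI : Fintype F := Fintype.ofFinite F
  have hF : Fintype.card F = p ^ e := by
    rw [← Nat.card_eq_fintype_card]
    exact GaloisField.card p e he.ne'
  let eV : (Quint F ⊕ Quint F) ≃ Fin (Fintype.card (Quint F ⊕ Quint F)) :=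
    Fintype.equivFin _
  apply Nat.sInf_le
  refine ⟨Fintype.card (Quint F ⊕ Quint F),
    (WG F).comap (eV.symm : Fin (Fintype.card (Quint F ⊕ Quint F)) → Quint F ⊕ Quint F),
    ?_, ?_⟩
  · rintro ⟨g, hg⟩
    apply wg_c10_free F
    exact ⟨SimpleGraph.Hom.comp ⟨(eV.symm : Fin _ → Quint F ⊕ Quint F), fun {a b} h => h⟩ g,
      eV.symm.injective.comp hg⟩
  · have hcard3 : Fintype.card (F × F × F) = (p ^ e) ^ 3 := by
      simp only [Fintype.card_prod, hF]; ring
    let e3 : (F × F × F) ≃ Fin ((p ^ e) ^ 3) := Fintype.equivFinOfCardEq hcard3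
    refine ⟨fun i => (part (e3.symm i)).map eV.toEmbedding, ?_, ?_, ?_⟩
    · intro v
      refine ⟨e3 (vkey (eV.symm v)), ?_, ?_⟩
      · simp only [Finset.mem_map_equiv, mem_part, Equiv.symm_apply_apply]
      · intro j hj
        simp only [Finset.mem_map_equiv, mem_part] at hj
        rw [hj, Equiv.apply_symm_apply]
    · intro i
      rw [Finset.card_map]
      refine le_trans (Finset.card_union_le _ _) ?_
      refine le_trans (add_le_add Finset.card_image_le Finset.card_image_le) ?_
      apply le_of_eq
      simp only [Finset.card_univ, Fintype.card_prod, hF]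
      ring
    · intro i j hij
      set a := e3.symm i with ha
      set b := e3.symm j with hb
      refine ⟨eV (Sum.inl (a.1, b.2.1 - b.1 * a.1,
          b.2.2 - b.1 * (b.2.1 - b.1 * a.1), a.2.1, a.2.2)), ?_,
        eV (Sum.inr (b.1, b.2.1, b.2.2,
          a.2.1 + b.1 * (b.2.2 - b.1 * (b.2.1 - b.1 * a.1)), a.2.2 + b.1 * a.2.1)), ?_, ?_⟩
      · rw [Finset.mem_map_equiv, Equiv.symm_apply_apply, mem_part]
        rfl
      · rw [Finset.mem_map_equiv, Equiv.symm_apply_apply, mem_part]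
        rfl
      · show (WG F).Adj (eV.symm (eV _)) (eV.symm (eV _))
        rw [Equiv.symm_apply_apply, Equiv.symm_apply_apply]
        show wrel _ _
        refine ⟨by ring, by ring, by ring, by ring⟩
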